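/- Let p ≤ -1 and γ₁ > γ₂ > 0, and let E be a real number with E > E_{γ₁}* and E > E_{γ₂}*, where E_{γᵢ}* denotes the minimum value of E_{γᵢ}. For i = 1, 2, let u_-^{(i)} < u_+^{(i)} denote the two positive roots of the equation E_{γᵢ}(u) = E. Then u_+^{(2)} > u_+^{(1)} > u_-^{(1)} > u_-^{(2)} > 0. -/

import Mathlib

open Real

/-- The function `E_γ(u) = u² + u⁻² - (2γ/p) u^{2p}` for `u > 0`. -/
noncomputable def Efun (p γ u : ℝ) : ℝ :=
  u ^ 2 + u ^ (-2 : ℝ) - 2 * γ / p * u ^ (2 * p)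

lemma rpow_strictConvexOn_neg {q : ℝ} (hq : q < 0) :
    StrictConvexOn ℝ (Set.Ioi 0) fun x : ℝ => x ^ q := by
  apply strictConvexOn_of_deriv2_pos' (convex_Ioi 0)
  · exact fun x hx =>
      (Real.continuousAt_rpow_const x q (Or.inl (ne_of_gt hx))).continuousWithinAt
  intro x hx
  have hx0 : (0 : ℝ) < x := hx
  have hderiv : ∀ y ∈ Set.Ioi (0 : ℝ),
      deriv (fun x : ℝ => x ^ q) y = q * y ^ (q - 1) := fun y hy =>
    (Real.hasDerivAt_rpow_const (Or.inl (ne_of_gt hy))).deriv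
  have hEq : deriv (fun x : ℝ => x ^ q) =ᶠ[nhds x] fun y : ℝ => q * y ^ (q - 1) :=
    Filter.eventuallyEq_of_mem (Ioi_mem_nhds hx0) hderiv
  have h2 : deriv^[2] (fun x : ℝ => x ^ q) x = q * ((q - 1) * x ^ (q - 1 - 1)) := by
    show deriv (deriv fun x : ℝ => x ^ q) x = _
    rw [hEq.deriv_eq]
    exact ((Real.hasDerivAt_rpow_const (x := x) (p := q - 1)
      (Or.inl hx0.ne')).const_mul q).deriv
  rw [h2]
  have := Real.rpow_pos_of_pos hx0 (q - 1 - 1)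
  have hq1 : q - 1 < 0 := by linarith
  nlinarith [mul_pos (mul_pos (neg_pos.2 hq) (by linarith : (0:ℝ) < -(q-1))) this]

lemma Efun_strictConvexOn {p γ : ℝ} (hp : p ≤ -1) (hγ : 0 < γ) :
    StrictConvexOn ℝ (Set.Ioi 0) (Efun p γ) := by
  have hp0 : p < 0 := lt_of_le_of_lt hp (by norm_num)
  have h1 : StrictConvexOn ℝ (Set.Ioi 0) fun u : ℝ => u ^ 2 :=
    (strictConvexOn_pow le_rfl).subset (Set.Ioi_subset_Ici le_rfl) (convex_Ioi 0)
  have h2 : StrictConvexOn ℝ (Set.Ioi 0) fun u : ℝ => u ^ (-2 : ℝ) :=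
    rpow_strictConvexOn_neg (by norm_num)
  have h3 : ConvexOn ℝ (Set.Ioi 0) fun u : ℝ => (-(2 * γ / p)) * u ^ (2 * p) := by
    have hc : (0 : ℝ) ≤ -(2 * γ / p) := by
      have : 2 * γ / p < 0 := div_neg_of_pos_of_neg (by linarith) hp0
      linarith
    exact ((rpow_strictConvexOn_neg (q := 2 * p) (by linarith)).convexOn).smul hc
  have h12 := h1.add h2
  have h := h12.add_convexOn h3
  have : Efun p γ = fun u : ℝ => (u ^ 2 + u ^ (-2 : ℝ)) + (-(2 * γ / p)) * u ^ (2 * p) := by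
    funext u; unfold Efun; ring
  rw [this]
  exact h

lemma mid_lt {f : ℝ → ℝ} (hf : StrictConvexOn ℝ (Set.Ioi 0) f) {x y z E : ℝ}
    (hx : 0 < x) (hxy : x < y) (hyz : y < z) (hfx : f x ≤ E) (hfz : f z ≤ E) :
    f y < E := by
  have hz : 0 < z := hx.trans (hxy.trans hyz)
  have hzx : 0 < z - x := by linarith
  set a := (z - y) / (z - x) with ha_def
  set b := (y - x) / (z - x) with hb_def
  have ha : 0 < a := div_pos (by linarith) hzx
  have hb : 0 < b := div_pos (by linarith) hzx
  have hab : a + b = 1 := by rw [← add_div]; field_simp; ring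
  have hxz : x ≠ z := by linarith
  have hkey := hf.2 (Set.mem_Ioi.2 hx) (Set.mem_Ioi.2 hz) hxz ha hb hab
  have hy : a • x + b • z = y := by
    simp only [smul_eq_mul, ha_def, hb_def]
    field_simp
    ring
  rw [hy] at hkey
  simp only [smul_eq_mul] at hkey
  have hle : a * f x + b * f z ≤ a * E + b * E :=
    add_le_add (mul_le_mul_of_nonneg_left hfx ha.le) (mul_le_mul_of_nonneg_left hfz hb.le)
  have hE' : a * E + b * E = E := by rw [← add_mul, hab, one_mul]
  linarith

lemma Efun_lt_Efun {p γ₁ γ₂ u : ℝ} (hp : p < 0) (hγ : γ₂ < γ₁) (hu : 0 < u) :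
    Efun p γ₂ u < Efun p γ₁ u := by
  have hT : 0 < u ^ (2 * p) := Real.rpow_pos_of_pos hu _
  have hdiff : Efun p γ₁ u - Efun p γ₂ u = 2 * (γ₁ - γ₂) * (-p)⁻¹ * u ^ (2 * p) := by
    unfold Efun
    field_simp
    ring
  have hpos : 0 < 2 * (γ₁ - γ₂) * (-p)⁻¹ * u ^ (2 * p) := by
    apply mul_pos _ hT
    apply mul_pos (by linarith) (inv_pos.2 (by linarith))
  linarith

theorem stmt_7 (p γ₁ γ₂ E : ℝ) (hp : p ≤ -1) (hγ₁ : γ₂ < γ₁) (hγ₂ : 0 < γ₂)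
    (hE₁ : sInf (Efun p γ₁ '' Set.Ioi 0) < E)
    (hE₂ : sInf (Efun p γ₂ '' Set.Ioi 0) < E)
    (um₁ up₁ um₂ up₂ : ℝ)
    (h₁pos : 0 < um₁) (h₁lt : um₁ < up₁)
    (h₁m : Efun p γ₁ um₁ = E) (h₁p : Efun p γ₁ up₁ = E)
    (h₂pos : 0 < um₂) (h₂lt : um₂ < up₂)
    (h₂m : Efun p γ₂ um₂ = E) (h₂p : Efun p γ₂ up₂ = E) :
    up₁ < up₂ ∧ um₁ < up₁ ∧ um₂ < um₁ ∧ 0 < um₂ := by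
  have hp0 : p < 0 := lt_of_le_of_lt hp (by norm_num)
  have hconv := Efun_strictConvexOn hp hγ₂
  have hm1 : Efun p γ₂ um₁ < E := h₁m ▸ Efun_lt_Efun hp0 hγ₁ h₁pos
  have hp1 : Efun p γ₂ up₁ < E := h₁p ▸ Efun_lt_Efun hp0 hγ₁ (h₁pos.trans h₁lt)
  have h1 : um₂ < um₁ := by
    by_contra h
    push_neg at h
    rcases eq_or_lt_of_le h with heq | hlt
    · rw [heq] at hm1; rw [h₂m] at hm1; exact lt_irrefl E hm1
    · have hmid : um₂ < up₂ := h₂lt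
      have := mid_lt hconv h₁pos hlt h₂lt hm1.le h₂p.le
      -- need um₁ < um₂ < up₂
      rw [h₂m] at this; exact lt_irrefl E this
  have h2 : up₁ < up₂ := by
    by_contra h
    push_neg at h
    rcases eq_or_lt_of_le h with heq | hlt
    · rw [← heq] at hp1; rw [h₂p] at hp1; exact lt_irrefl E hp1
    · have := mid_lt hconv h₂pos h₂lt hlt h₂m.le hp1.le
      rw [h₂p] at this; exact lt_irrefl E this
  exact ⟨h2, h₁lt, h1, h₂pos⟩
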